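/- Maximizing the likelihood ∏_{e∈E} σ(a_v(e)) · ∏_{e∈E'} (1-σ(a_v(e))) over a parameter v ranging in a finite set is equivalent to maximizing ∑_{e∈E} a_v(e): a value v₀ maximizes the first expression if and only if it maximizes the second. -/

import Mathlib

/-- Maximum-likelihood equivalence (Theorem 3.1): assuming ∏_{e∈U}(1-σ(a_v(e)))
    is independent of v, a parameter v₀ maximizes the likelihood
    ∏_{e∈E} σ(a_v(e)) · ∏_{e∈U\E} (1-σ(a_v(e))) over the finite index set P
    if and only if it maximizes ∑_{e∈E} a_v(e). -/
theorem max_likelihood_iff_max_sum {ι P : Type*} [DecidableEq ι] [Fintype P]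
    (σ : ℝ → ℝ) (hσ : ∀ t : ℝ, σ t = 1 / (1 + Real.exp (-t)))
    (U E : Finset ι) (hE : E ⊆ U) (a : P → ι → ℝ)
    (hindep : ∀ v w : P, (∏ e ∈ U, (1 - σ (a v e))) = ∏ e ∈ U, (1 - σ (a w e)))
    (v₀ : P) :
    (∀ v : P,
        (∏ e ∈ E, σ (a v e)) * (∏ e ∈ U \ E, (1 - σ (a v e)))
          ≤ (∏ e ∈ E, σ (a v₀ e)) * (∏ e ∈ U \ E, (1 - σ (a v₀ e))))
      ↔ (∀ v : P, (∑ e ∈ E, a v e) ≤ ∑ e ∈ E, a v₀ e) := by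
  have hpos : ∀ t : ℝ, 0 < 1 - σ t := by
    intro t
    rw [hσ]
    have h1 : (0:ℝ) < Real.exp (-t) := Real.exp_pos _
    have h2 : (0:ℝ) < 1 + Real.exp (-t) := by linarith
    rw [sub_pos, div_lt_one h2]
    linarith
  have hsig : ∀ t : ℝ, σ t = Real.exp t * (1 - σ t) := by
    intro t
    rw [hσ]
    have h2 : (1:ℝ) + Real.exp (-t) ≠ 0 := by
      have := Real.exp_pos (-t); linarith
    field_simp
    rw [add_sub_cancel_left, ← Real.exp_add]
    simp
  have key : ∀ v : P,
      (∏ e ∈ E, σ (a v e)) * (∏ e ∈ U \ E, (1 - σ (a v e)))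
        = Real.exp (∑ e ∈ E, a v e) * ∏ e ∈ U, (1 - σ (a v₀ e)) := by
    intro v
    have : (∏ e ∈ E, σ (a v e))
        = (∏ e ∈ E, Real.exp (a v e)) * ∏ e ∈ E, (1 - σ (a v e)) := by
      rw [← Finset.prod_mul_distrib]
      exact Finset.prod_congr rfl fun e _ => hsig _
    rw [this, mul_assoc, mul_comm (∏ e ∈ E, (1 - σ (a v e))), Finset.prod_sdiff hE, Real.exp_sum, hindep v₀ v]
  have hC : 0 < ∏ e ∈ U, (1 - σ (a v₀ e)) :=
    Finset.prod_pos fun e _ => hpos _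
  constructor
  · intro h v
    have := h v
    rw [key v, key v₀] at this
    exact Real.exp_le_exp.mp (le_of_mul_le_mul_right this hC)
  · intro h v
    rw [key v, key v₀]
    exact mul_le_mul_of_nonneg_right (Real.exp_le_exp.mpr (h v)) hC.le
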